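/- arXiv:2411.08179 — 4 statements merged into one kernel-verified Lean document; each statement's English description precedes it below -/
import Mathlib

section
/- For every real β with 0 < β and every x ∈ ℝ, define h(x) = −(1−β²)·e^x / ((β·e^x + 1)·(e^x + β)). Then |h(x)| ≤ |1−β| / (1+β) for all x ∈ ℝ. -/
/-- For `β > 0` and `h(x) = -(1-β²)eˣ/((βeˣ+1)(eˣ+β))`, one has `|h(x)| ≤ |1-β|/(1+β)`. -/
theorem stmt_7 (β : ℝ) (hβ : 0 < β) (x : ℝ) :
    |(-((1 - β ^ 2) * Real.exp x / ((β * Real.exp x + 1) * (Real.exp x + β))))| ≤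
      |1 - β| / (1 + β) := by
  set e := Real.exp x with he
  have hep : 0 < e := Real.exp_pos x
  have hden : 0 < (β * e + 1) * (e + β) := by positivity
  have h1β : 0 < 1 + β := by linarith
  rw [abs_neg, abs_div, abs_of_pos hden, div_le_div_iff₀ hden h1β]
  have habs : |(1 - β ^ 2) * e| = |1 - β| * ((1 + β) * e) := by
    have : (1 - β ^ 2) * e = (1 - β) * ((1 + β) * e) := by ring
    rw [this, abs_mul, abs_of_pos (show (0:ℝ) < (1 + β) * e by positivity)]
  rw [habs]
  have key : (1 + β) * e * (1 + β) ≤ (β * e + 1) * (e + β) := by nlinarith [sq_nonneg (e - 1)]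
  calc |1 - β| * ((1 + β) * e) * (1 + β) = |1 - β| * ((1 + β) * e * (1 + β)) := by ring
    _ ≤ |1 - β| * ((β * e + 1) * (e + β)) := by
        exact mul_le_mul_of_nonneg_left key (abs_nonneg _)
end

section
/- Fix R > 1 and ε ∈ (0,1). Define f(x) = |x−1|/(x+1) on the interval [ (R−1+ε)/(R+1−ε), (R+1−ε)/(R−1+ε) ]. Then sup of f over this interval equals (1−ε)/R, attained at both endpoints. -/
/-- On the Ising uniqueness interval `U(R,ε) = [(R-1+ε)/(R+1-ε), (R+1-ε)/(R-1+ε)]`, the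
function `f(x) = |x-1|/(x+1)` attains its supremum `(1-ε)/R` at both endpoints. -/
theorem stmt_8 (R ε : ℝ) (hR : 1 < R) (hε : ε ∈ Set.Ioo (0:ℝ) 1) :
    let a := (R - 1 + ε) / (R + 1 - ε)
    let b := (R + 1 - ε) / (R - 1 + ε)
    let f : ℝ → ℝ := fun x => |x - 1| / (x + 1)
    f a = (1 - ε) / R ∧ f b = (1 - ε) / R ∧ ∀ x ∈ Set.Icc a b, f x ≤ (1 - ε) / R := by
  obtain ⟨hε0, hε1⟩ := hε
  intro a b f
  have hu : 0 < R - 1 + ε := by linarith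
  have hv : 0 < R + 1 - ε := by linarith
  have hR0 : 0 < R := by linarith
  have ha1 : a < 1 := by
    show (R - 1 + ε) / (R + 1 - ε) < 1
    rw [div_lt_one hv]; linarith
  have hb1 : 1 < b := by
    show 1 < (R + 1 - ε) / (R - 1 + ε)
    rw [lt_div_iff₀ hu]; linarith
  have ha0 : 0 < a := div_pos hu hv
  refine ⟨?_, ?_, ?_⟩
  · show |a - 1| / (a + 1) = (1 - ε) / R
    rw [abs_of_neg (by linarith)]
    show -((R - 1 + ε) / (R + 1 - ε) - 1) / ((R - 1 + ε) / (R + 1 - ε) + 1) = (1 - ε) / R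
    field_simp
    ring
  · show |b - 1| / (b + 1) = (1 - ε) / R
    rw [abs_of_pos (by linarith)]
    show ((R + 1 - ε) / (R - 1 + ε) - 1) / ((R + 1 - ε) / (R - 1 + ε) + 1) = (1 - ε) / R
    field_simp
    ring
  · rintro x ⟨hxa, hxb⟩
    have hx0 : 0 < x + 1 := by linarith
    show |x - 1| / (x + 1) ≤ (1 - ε) / R
    rw [div_le_div_iff₀ hx0 hR0]
    rcases le_or_gt x 1 with h | h
    · rw [abs_of_nonpos (by linarith)]
      have : (R - 1 + ε) ≤ x * (R + 1 - ε) := by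
        rw [← div_le_iff₀ hv] at *
        exact hxa
      nlinarith
    · rw [abs_of_pos (by linarith)]
      have : x * (R - 1 + ε) ≤ (R + 1 - ε) := by
        rw [← le_div_iff₀ hu]
        exact hxb
      nlinarith
end

section
/- For λ > 0, define h(x) = −e^x/(e^x+1) and χ(y) = √(e^y/(1+e^y)) for y ∈ ℝ. Let J = (−∞, log λ). Then max over y₁, y₂ ∈ J of χ(y₂)·|h(y₁)|/χ(y₁) equals √( (λ/(1+λ))² ) = λ/(1+λ), i.e. sup_{y₁,y₂ ∈ J} χ(y₂)·|h(y₁)|/χ(y₁) ≤ λ/(1+λ). -/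
/-- For `h(y) = -e^y/(e^y+1)`, `χ(y) = √(e^y/(1+e^y))` and `J = (-∞, log λ)`, the quantity
`χ(y₂)|h(y₁)|/χ(y₁)` is at most `λ/(1+λ)` for all `y₁, y₂ ∈ J`. -/
theorem stmt_11 (lam : ℝ) (hlam : 0 < lam) :
    ∀ y₁ ∈ Set.Iio (Real.log lam), ∀ y₂ ∈ Set.Iio (Real.log lam),
      Real.sqrt (Real.exp y₂ / (1 + Real.exp y₂)) *
          |(-(Real.exp y₁ / (Real.exp y₁ + 1)))| /
          Real.sqrt (Real.exp y₁ / (1 + Real.exp y₁)) ≤ lam / (1 + lam) := by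
  intro y₁ hy₁ y₂ hy₂
  set a := Real.exp y₁ with ha
  set b := Real.exp y₂ with hb
  have ha0 : 0 < a := Real.exp_pos y₁
  have hb0 : 0 < b := Real.exp_pos y₂
  have halam : a < lam := by
    rw [ha, ← Real.exp_log hlam]; exact Real.exp_lt_exp.2 hy₁
  have hblam : b < lam := by
    rw [hb, ← Real.exp_log hlam]; exact Real.exp_lt_exp.2 hy₂
  have h1a : 0 < 1 + a := by linarith
  have h1b : 0 < 1 + b := by linarith
  have h1l : 0 < 1 + lam := by linarith
  have key : ∀ x : ℝ, 0 < x → x < lam → x / (1 + x) ≤ lam / (1 + lam) := by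
    intro x hx hxl
    rw [div_le_div_iff₀ (by linarith) h1l]
    nlinarith
  have habs : |(-(a / (a + 1)))| = a / (1 + a) := by
    rw [abs_neg, abs_of_nonneg (by positivity), add_comm a 1]
  rw [habs]
  have hsq : a / (1 + a) = Real.sqrt (a / (1 + a)) * Real.sqrt (a / (1 + a)) := by
    exact (Real.mul_self_sqrt (show (0:ℝ) ≤ a / (1 + a) by positivity)).symm
  have hspos : 0 < Real.sqrt (a / (1 + a)) := Real.sqrt_pos.2 (by positivity)
  calc Real.sqrt (b / (1 + b)) * (a / (1 + a)) / Real.sqrt (a / (1 + a))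
      = Real.sqrt (b / (1 + b)) * Real.sqrt (a / (1 + a)) := by
        rw [mul_div_assoc]
        congr 1
        rw [div_eq_iff hspos.ne']
        exact hsq
    _ = Real.sqrt (b / (1 + b) * (a / (1 + a))) := (Real.sqrt_mul (by positivity) _).symm
    _ ≤ Real.sqrt (lam / (1 + lam) * (lam / (1 + lam))) := by
        apply Real.sqrt_le_sqrt
        exact mul_le_mul (key b hb0 hblam) (key a ha0 halam) (by positivity) (by positivity)
    _ = lam / (1 + lam) := Real.sqrt_mul_self (by positivity)
end

section
/- For ε ∈ (0,1) and R ≥ 2, let λ_c(R) = R^R/(R−1)^{R+1} and let Δ_c(λ) be the inverse function of λ_c (i.e. the unique z > 1 with z^z/(z−1)^{z+1} = λ). Then for any 0 < λ < (1−ε)·λ_c(R), there exists z ∈ (0,1) depending only on ε such that (1−z)/R ≥ 1/Δ_c(λ) and λ/(1+λ) < e³/R. -/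
noncomputable def fc (x : ℝ) : ℝ := x * Real.log x - (x + 1) * Real.log (x - 1)

lemma fc_hasDerivAt {x : ℝ} (hx : 1 < x) :
    HasDerivAt fc (Real.log x - Real.log (x - 1) - 2 / (x - 1)) x := by
  have hx0 : x ≠ 0 := by linarith
  have hx1 : x - 1 ≠ 0 := by intro h; nlinarith [h]
  have h1 : HasDerivAt (fun x : ℝ => x * Real.log x) (Real.log x + 1) x :=
    Real.hasDerivAt_mul_log hx0
  have h2 : HasDerivAt (fun x : ℝ => Real.log (x - 1)) ((x - 1)⁻¹ * 1) x :=
    by have := (Real.hasDerivAt_log hx1).comp x ((hasDerivAt_id x).sub_const 1); exact this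
  have h3 : HasDerivAt (fun x : ℝ => (x + 1) * Real.log (x - 1))
      (1 * Real.log (x - 1) + (x + 1) * ((x - 1)⁻¹ * 1)) x :=
    ((hasDerivAt_id x).add_const 1).mul h2
  have := h1.sub h3
  refine this.congr_deriv ?_
  have : x - 1 ≠ 0 := hx1
  linear_combination -(mul_inv_cancel₀ hx1)

lemma fc_contOn : ContinuousOn fc (Set.Ioi (1:ℝ)) :=
  fun x hx => ((fc_hasDerivAt hx).continuousAt).continuousWithinAt

lemma fc_deriv_lt {x : ℝ} (hx : 1 < x) :
    Real.log x - Real.log (x - 1) - 2 / (x - 1) ≤ -1 / (x - 1) := by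
  have hx1 : (0:ℝ) < x - 1 := by linarith
  have h : Real.log x - Real.log (x - 1) ≤ 1 / (x - 1) := by
    rw [← Real.log_div (by linarith) (by linarith)]
    have := Real.log_le_sub_one_of_pos (x := x / (x - 1)) (by positivity)
    have e : x / (x - 1) - 1 = 1 / (x - 1) := by field_simp; ring
    linarith [e ▸ this]
  have e2 : (-1:ℝ)/(x-1) = 1/(x-1) - 2/(x-1) := by ring
  linarith [h]

lemma fc_strictAntiOn : StrictAntiOn fc (Set.Ioi (1:ℝ)) := by
  apply strictAntiOn_of_deriv_neg (convex_Ioi 1) fc_contOn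
  intro x hx
  rw [interior_Ioi] at hx
  rw [(fc_hasDerivAt hx).deriv]
  have hx1 : (0:ℝ) < x - 1 := by simpa using sub_pos.mpr (Set.mem_Ioi.mp hx)
  have := fc_deriv_lt hx
  have : (-1:ℝ) / (x - 1) < 0 := by
    apply div_neg_of_neg_of_pos <;> linarith
  linarith [fc_deriv_lt hx]

lemma exp_fc {x : ℝ} (hx : 1 < x) :
    Real.exp (fc x) = x ^ x / (x - 1) ^ (x + 1) := by
  rw [Real.rpow_def_of_pos (by linarith : (0:ℝ) < x),
    Real.rpow_def_of_pos (by linarith : (0:ℝ) < x - 1), fc, Real.exp_sub]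
  ring_nf
lemma log_diff_le {x : ℝ} (hx : 1 < x) :
    Real.log x - Real.log (x - 1) ≤ 1 / (x - 1) := by
  rw [← Real.log_div (by linarith) (by linarith)]
  have hne : x - 1 ≠ 0 := by intro h; nlinarith [h]
  have h := Real.log_le_sub_one_of_pos (x := x / (x - 1)) (by
    apply div_pos <;> linarith)
  have e : x / (x - 1) - 1 = 1 / (x - 1) := by field_simp; ring
  linarith [e ▸ h]

/-- For `ε ∈ (0,1)`, `R ≥ 2` and `0 < λ < (1-ε)λ_c(R)`, with `Δ_c(λ)` the unique `z > 1`
satisfying `z^z/(z-1)^{z+1} = λ`, there is `z ∈ (0,1)` depending only on `ε` such that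
`(1-z)/R ≥ 1/Δ_c(λ)` and `λ/(1+λ) < e³/R`. -/
theorem stmt_12 : ∀ ε ∈ Set.Ioo (0:ℝ) 1, ∃ z ∈ Set.Ioo (0:ℝ) 1,
    ∀ R : ℝ, 2 ≤ R → ∀ lam : ℝ, 0 < lam →
      lam < (1 - ε) * (R ^ R / (R - 1) ^ (R + 1)) →
      ∀ Δc : ℝ, 1 < Δc → Δc ^ Δc / (Δc - 1) ^ (Δc + 1) = lam →
        (1 - z) / R ≥ 1 / Δc ∧ lam / (1 + lam) < Real.exp 3 / R := by
  intro ε hε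
  obtain ⟨hε0, hε1⟩ := hε
  refine ⟨ε / 8, ⟨by linarith, by linarith⟩, ?_⟩
  intro R hR lam hlam hlt Δc hΔ1 hΔeq
  set z : ℝ := ε / 8 with hz
  have hz0 : 0 < z := by positivity
  have h1z : 0 < 1 - z := by rw [hz]; linarith
  set R' : ℝ := R / (1 - z) with hR'def
  have hR1 : 1 < R := by linarith
  have hRR' : R < R' := by
    rw [hR'def, lt_div_iff₀ h1z]; nlinarith
  have hR'1 : 1 < R' := lt_trans hR1 hRR'
  have hgR : Real.exp (fc R) = R ^ R / (R - 1) ^ (R + 1) := exp_fc hR1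
  have hgΔ : Real.exp (fc Δc) = lam := by rw [exp_fc hΔ1, hΔeq]
  rw [← hgR] at hlt
  -- key quantitative bound
  have key : fc R - fc R' ≤ ε := by
    have hC : (0:ℝ) < R - 1 := by linarith
    set C : ℝ := 2 / (R - 1) with hCdef
    have hder : ∀ x : ℝ, 1 < x → HasDerivAt (fun x => fc x + C * x)
        (Real.log x - Real.log (x - 1) - 2 / (x - 1) + C * 1) x := by
      intro x hx1
      exact (fc_hasDerivAt hx1).add ((hasDerivAt_id x).const_mul C)
    have hsub : Set.Icc R R' ⊆ Set.Ioi (1:ℝ) := fun x hx => lt_of_lt_of_le hR1 hx.1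
    have hmono : MonotoneOn (fun x => fc x + C * x) (Set.Icc R R') := by
      apply monotoneOn_of_deriv_nonneg (convex_Icc R R')
      · intro x hx
        exact ((hder x (hsub hx)).continuousAt).continuousWithinAt
      · intro x hx
        rw [interior_Icc] at hx
        exact ((hder x (by exact lt_trans hR1 hx.1)).differentiableAt).differentiableWithinAt
      · intro x hx
        rw [interior_Icc] at hx
        have hx1 : 1 < x := lt_trans hR1 hx.1
        rw [(hder x hx1).deriv]
        have hlog : 0 ≤ Real.log x - Real.log (x - 1) := by
          have := Real.log_le_log (by linarith : (0:ℝ) < x - 1) (by linarith : x - 1 ≤ x)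
          linarith
        have h2 : 2 / (x - 1) ≤ C := by
          rw [hCdef]
          apply div_le_div_of_nonneg_left (by norm_num) (by linarith) (by linarith [hx.1])
        have : C * 1 = C := mul_one C
        linarith
    have h0 : fc R + C * R ≤ fc R' + C * R' := hmono (Set.left_mem_Icc.mpr hRR'.le) (Set.right_mem_Icc.mpr hRR'.le) hRR'.le
    have hval : C * (R' - R) ≤ ε := by
      have e : R' - R = R * z / (1 - z) := by
        rw [hR'def]; field_simp; ring
      have e2 : C * (R' - R) = 2 * R * z / ((R - 1) * (1 - z)) := by
        rw [e, hCdef]; field_simp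
      rw [e2, div_le_iff₀ (by positivity)]
      rw [hz]
      have hq : ε * (ε * (R - 1)) ≤ ε * (R - 1) := by
        nlinarith [mul_nonneg (mul_nonneg hε0.le (by linarith : (0:ℝ) ≤ 1 - ε)) hC.le]
      nlinarith [hq, mul_nonneg hε0.le (show (0:ℝ) ≤ 5 * R - 7 by linarith)]
    linarith
  have hA : (1 - ε) * Real.exp (fc R) ≤ Real.exp (fc R') := by
    have h1 : (1 - ε) ≤ Real.exp (-ε) := by
      have := Real.add_one_le_exp (-ε); linarith
    calc (1 - ε) * Real.exp (fc R) ≤ Real.exp (-ε) * Real.exp (fc R) :=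
          mul_le_mul_of_nonneg_right h1 (Real.exp_nonneg _)
      _ = Real.exp (fc R - ε) := by rw [← Real.exp_add]; ring_nf
      _ ≤ Real.exp (fc R') := Real.exp_le_exp.mpr (by linarith)
  have hΔR' : R' ≤ Δc := by
    by_contra hcon
    push_neg at hcon
    have hanti := fc_strictAntiOn (Set.mem_Ioi.mpr hΔ1) (Set.mem_Ioi.mpr hR'1) hcon
    have h2 : Real.exp (fc R') < lam := by
      rw [← hgΔ]; exact Real.exp_lt_exp.mpr hanti
    linarith
  constructor
  · have hΔpos : 0 < Δc := by linarith
    rw [ge_iff_le, div_le_div_iff₀ hΔpos (by linarith : (0:ℝ) < R)]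
    have hReq : R = (1 - z) * R' := by
      rw [hR'def]; field_simp
    nlinarith
  · have hfcR : fc R ≤ 2 - Real.log (R - 1) := by
      have hlog := log_diff_le hR1
      have e : fc R = R * (Real.log R - Real.log (R - 1)) - Real.log (R - 1) := by
        rw [fc]; ring
      have h2 : R * (1 / (R - 1)) ≤ 2 := by
        rw [mul_one_div, div_le_iff₀ (by linarith)]; linarith
      have h3 : R * (Real.log R - Real.log (R - 1)) ≤ R * (1 / (R - 1)) :=
        mul_le_mul_of_nonneg_left hlog (by linarith)
      linarith [e ▸ le_refl (fc R)]
    have hgRle : Real.exp (fc R) ≤ Real.exp 3 / R := by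
      calc Real.exp (fc R) ≤ Real.exp (2 - Real.log (R - 1)) := Real.exp_le_exp.mpr hfcR
        _ = Real.exp 2 / (R - 1) := by
            rw [Real.exp_sub, Real.exp_log (by linarith)]
        _ ≤ Real.exp 3 / R := by
            rw [div_le_div_iff₀ (by linarith) (by linarith)]
            have e3 : Real.exp 3 = Real.exp 2 * Real.exp 1 := by
              rw [← Real.exp_add]; norm_num
            have he : (2:ℝ) ≤ Real.exp 1 := by
              have := Real.add_one_le_exp (1:ℝ); linarith
            nlinarith [mul_nonneg (mul_nonneg (Real.exp_pos 2).le
                (by linarith : (0:ℝ) ≤ Real.exp 1 - 2)) (by linarith : (0:ℝ) ≤ R - 1),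
              mul_nonneg (Real.exp_pos 2).le (by linarith : (0:ℝ) ≤ R - 2)]
    have h4 : lam / (1 + lam) < lam := by
      rw [div_lt_iff₀ (by linarith)]; nlinarith
    have h5 : lam < Real.exp (fc R) := by
      nlinarith [Real.exp_pos (fc R)]
    linarith
end
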